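/- If X and Y are compatible subspaces of a finite-dimensional complex inner product space H, then X^⊥ and Y are compatible. -/

import Mathlib

open Module Submodule

/-- Two subspaces `X`, `Y` are compatible if there exist subspaces `X'`, `Y'` such that
`X ⊓ Y`, `X'`, `Y'` are mutually orthogonal, `X = X' + (X ⊓ Y)` and `Y = Y' + (X ⊓ Y)`. -/
def Compatible {H : Type*} [NormedAddCommGroup H] [InnerProductSpace ℂ H]
    (X Y : Submodule ℂ H) : Prop :=
  ∃ X' Y' : Submodule ℂ H,
    X' ≤ (X ⊓ Y)ᗮ ∧ Y' ≤ (X ⊓ Y)ᗮ ∧ X' ≤ Y'ᗮ ∧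
    X = X' ⊔ (X ⊓ Y) ∧ Y = Y' ⊔ (X ⊓ Y)

theorem stmt_11 {H : Type*} [NormedAddCommGroup H] [InnerProductSpace ℂ H]
    [FiniteDimensional ℂ H] (X Y : Submodule ℂ H) (h : Compatible X Y) :
    Compatible Xᗮ Y := by
  obtain ⟨X', Y', hX'M, hY'M, hXY', hX, hY⟩ := h
  set M := X ⊓ Y with hMdef
  -- Y' ⊥ X' (symmetric form)
  have hY'X' : Y' ≤ X'ᗮ := by
    intro v hv
    rw [Submodule.mem_orthogonal]
    intro u hu
    exact inner_eq_zero_symm.mp (hXY' hu v hv)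
  -- Y' ≤ Xᗮ
  have hY'X : Y' ≤ Xᗮ := by
    intro v hv
    rw [Submodule.mem_orthogonal]
    intro u hu
    rw [hX] at hu
    obtain ⟨x, hx, m, hm, rfl⟩ := Submodule.mem_sup.mp hu
    have h1 : (inner ℂ x v : ℂ) = 0 := hY'X' hv x hx
    have h2 : (inner ℂ m v : ℂ) = 0 := hY'M hv m hm
    rw [inner_add_left, h1, h2, add_zero]
  -- M ≤ Y'ᗮ
  have hMY' : M ≤ Y'ᗮ := by
    intro m hm
    rw [Submodule.mem_orthogonal]
    intro u hu
    exact inner_eq_zero_symm.mp (hY'M hu m hm)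
  -- key: Xᗮ ⊓ Y = Y'
  have hN : Xᗮ ⊓ Y = Y' := by
    apply le_antisymm
    · rintro v ⟨hv1, hv2⟩
      rw [hY] at hv2
      obtain ⟨y, hy, m, hm, rfl⟩ := Submodule.mem_sup.mp hv2
      have hmX : m ∈ X := hm.1
      have h1 : (inner ℂ m (y + m) : ℂ) = 0 := hv1 m hmX
      have h2 : (inner ℂ m y : ℂ) = 0 := hY'M hy m hm
      rw [inner_add_right, h2, zero_add] at h1
      have hm0 : m = 0 := inner_self_eq_zero.mp h1
      rw [hm0, add_zero]
      exact hy
    · exact le_inf hY'X (hY ▸ le_sup_left)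
  refine ⟨Y'ᗮ ⊓ Xᗮ, M, ?_, ?_, ?_, ?_, ?_⟩
  · rw [hN]; exact inf_le_left
  · rw [hN]; exact hMY'
  · exact le_trans inf_le_right (Submodule.orthogonal_le inf_le_left)
  · rw [hN, sup_comm]
    exact (Submodule.sup_orthogonal_inf_of_hasOrthogonalProjection hY'X).symm
  · rw [hN, hY, sup_comm]
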